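/- Hellinger loss boosting: for every α ∈ [1/2, 1], every β ∈ [0, 1], and every (possibly partial) function f : X → {0,1} with X ⊆ {0,1}^m, the maximum distributional complexity at Hellinger loss parameter α·(1 − (1−β)/6) satisfies R̄̄_{Hel↓, α(1−(1−β)/6)}(f) ≤ R̄̄_{Hel↓, α}(f) + 2·R̄̄_{Hel↓, β}(f). -/

import Mathlib

open Finset

/-- Deterministic decision trees querying coordinates `i : ι` of inputs `x : ι → Bool`,
with leaves labelled by elements of `L`. -/
inductive DTree (ι : Type) (L : Type) : Type
  | leaf (lab : L) : DTree ι L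
  | node (i : ι) (t0 : DTree ι L) (t1 : DTree ι L) : DTree ι L

namespace DTree

variable {ι L : Type}

/-- Output label at the leaf reached by input `x`. -/
def out : DTree ι L → (ι → Bool) → L
  | .leaf lab, _ => lab
  | .node i t0 t1, x => if x i then out t1 x else out t0 x

/-- Number of queries made on input `x` (depth of the leaf reached by `x`). -/
def cost : DTree ι L → (ι → Bool) → ℕ
  | .leaf _, _ => 0
  | .node i t0 t1, x => (if x i then cost t1 x else cost t0 x) + 1

/-- Maximum leaf depth of the tree. -/
def depth : DTree ι L → ℕ
  | .leaf _ => 0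
  | .node _ t0 t1 => max (depth t0) (depth t1) + 1

/-- The set of inputs reaching the same leaf as input `x`. -/
def leafSet : DTree ι L → (ι → Bool) → Set (ι → Bool)
  | .leaf _, _ => Set.univ
  | .node i t0 t1, x => {y | y i = x i} ∩ (if x i then leafSet t1 x else leafSet t0 x)

/-- Every leaf label of the tree satisfies the predicate `P`. -/
def allLabels : DTree ι L → (L → Prop) → Prop
  | .leaf lab, P => P lab
  | .node _ t0 t1, P => allLabels t0 P ∧ allLabels t1 P

end DTree

/-- A randomized query algorithm: a finitely supported probability distribution over
deterministic decision trees. -/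
structure RandAlg (ι : Type) (L : Type) where
  k : ℕ
  p : Fin k → ℝ
  T : Fin k → DTree ι L
  p_nonneg : ∀ j, 0 ≤ p j
  p_sum : ∑ j, p j = 1

/-- A probability distribution on inputs, supported inside the domain `X`. -/
structure InputDist (ι : Type) [Fintype ι] [DecidableEq ι] (X : Set (ι → Bool)) where
  μ : (ι → Bool) → ℝ
  nonneg : ∀ x, 0 ≤ μ x
  sum_one : ∑ x, μ x = 1
  supp : ∀ x, x ∉ X → μ x = 0

/-- A score function `φ : [0,1] → [1/2,1]`. -/
structure ScoreFun where
  φ : ℝ → ℝ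
  continuous : ContinuousOn φ (Set.Icc 0 1)
  half_le : ∀ p ∈ Set.Icc (0:ℝ) 1, 1 / 2 ≤ φ p
  le_one : ∀ p ∈ Set.Icc (0:ℝ) 1, φ p ≤ 1
  map_zero : φ 0 = 1
  map_one : φ 1 = 1
  map_half : φ (1 / 2) = 1 / 2
  symm : ∀ p ∈ Set.Icc (0:ℝ) 1, φ (1 - p) = φ p
  mono : MonotoneOn φ (Set.Icc (1 / 2) 1)

section Defs

variable {ι L : Type} [Fintype ι] [DecidableEq ι]

/-- Mass of a set of inputs under the weight function `μ`. -/
noncomputable def mass (μ : (ι → Bool) → ℝ) (S : Set (ι → Bool)) : ℝ :=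
  ∑ x, Set.indicator S μ x

/-- Score `φ(μ(ℓ₁)/μ(ℓ))` of the leaf `ℓ` reached by `x` in the tree `t`. -/
noncomputable def leafScore (S : ScoreFun) (f : (ι → Bool) → Bool) (μ : (ι → Bool) → ℝ)
    (t : DTree ι L) (x : ι → Bool) : ℝ :=
  S.φ (mass μ (t.leafSet x ∩ {y | f y = true}) / mass μ (t.leafSet x))

/-- Score of a randomized algorithm: `E_{D∼R, x∼μ}[score(D(x))]`. -/
noncomputable def algScore (S : ScoreFun) (f : (ι → Bool) → Bool) (μ : (ι → Bool) → ℝ)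
    (R : RandAlg ι L) : ℝ :=
  ∑ j, R.p j * ∑ x, μ x * leafScore S f μ (R.T j) x

/-- Expected cost `E_{D∼R, x∼μ}[cost(D(x))]`. -/
noncomputable def expCost (μ : (ι → Bool) → ℝ) (R : RandAlg ι L) : ℝ :=
  ∑ j, R.p j * ∑ x, μ x * ((R.T j).cost x : ℝ)

/-- Score-weighted cost `E[score(D(x))·cost(D(x))] / E[score(D(x))]`. -/
noncomputable def scost (S : ScoreFun) (f : (ι → Bool) → Bool) (μ : (ι → Bool) → ℝ)
    (R : RandAlg ι L) : ℝ :=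
  (∑ j, R.p j * ∑ x, μ x * (leafScore S f μ (R.T j) x * ((R.T j).cost x : ℝ))) /
    algScore S f μ R

/-- Discounted score `E[score(D(x))·e^{-α·cost(D(x))}]`. -/
noncomputable def dScore (S : ScoreFun) (f : (ι → Bool) → Bool) (μ : (ι → Bool) → ℝ)
    (α : ℝ) (R : RandAlg ι L) : ℝ :=
  ∑ j, R.p j * ∑ x, μ x *
    (leafScore S f μ (R.T j) x * Real.exp (-(α * ((R.T j).cost x : ℝ))))

/-- Maximum discounted score `DS_α^μ(f)`. -/
noncomputable def DS (S : ScoreFun) (f : (ι → Bool) → Bool) (μ : (ι → Bool) → ℝ)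
    (α : ℝ) : ℝ :=
  ⨆ R : RandAlg ι Unit, dScore S f μ α R

/-- Distributional score-weighted query complexity `sR̄̄_γ^μ(f)`. -/
noncomputable def sRdist (S : ScoreFun) (f : (ι → Bool) → Bool) (μ : (ι → Bool) → ℝ)
    (γ : ℝ) : ℝ :=
  sInf {c | ∃ R : RandAlg ι Unit, γ ≤ algScore S f μ R ∧ scost S f μ R = c}

/-- Distributional query complexity `R̄̄_γ^μ(f)` (expected cost). -/
noncomputable def Rdist (S : ScoreFun) (f : (ι → Bool) → Bool) (μ : (ι → Bool) → ℝ)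
    (γ : ℝ) : ℝ :=
  sInf {c | ∃ R : RandAlg ι Unit, γ ≤ algScore S f μ R ∧ expCost μ R = c}

/-- Maximum score-weighted distributional query complexity `sR̄̄_γ(f)`. -/
noncomputable def sRmax (S : ScoreFun) (X : Set (ι → Bool)) (f : (ι → Bool) → Bool)
    (γ : ℝ) : ℝ :=
  ⨆ μ : InputDist ι X, sRdist S f μ.μ γ

/-- Maximum distributional query complexity `R̄̄_γ(f)`. -/
noncomputable def Rmax (S : ScoreFun) (X : Set (ι → Bool)) (f : (ι → Bool) → Bool)
    (γ : ℝ) : ℝ :=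
  ⨆ μ : InputDist ι X, Rdist S f μ.μ γ

/-- Success-probability score `max{μ(ℓ₀),μ(ℓ₁)}/μ(ℓ)` of the leaf reached by `x`. -/
noncomputable def succLeafScore (f : (ι → Bool) → Bool) (μ : (ι → Bool) → ℝ)
    (t : DTree ι L) (x : ι → Bool) : ℝ :=
  max (mass μ (t.leafSet x ∩ {y | f y = false})) (mass μ (t.leafSet x ∩ {y | f y = true})) /
    mass μ (t.leafSet x)

/-- Success-probability score of a randomized algorithm. -/
noncomputable def succAlgScore (f : (ι → Bool) → Bool) (μ : (ι → Bool) → ℝ)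
    (R : RandAlg ι L) : ℝ :=
  ∑ j, R.p j * ∑ x, μ x * succLeafScore f μ (R.T j) x

/-- Distributional query complexity with the success-probability score. -/
noncomputable def succRdist (f : (ι → Bool) → Bool) (μ : (ι → Bool) → ℝ) (γ : ℝ) : ℝ :=
  sInf {c | ∃ R : RandAlg ι Unit, γ ≤ succAlgScore f μ R ∧ expCost μ R = c}

/-- Maximum distributional query complexity `R̄̄_γ(f)` with the success-probability score. -/
noncomputable def succRmax (X : Set (ι → Bool)) (f : (ι → Bool) → Bool) (γ : ℝ) : ℝ :=
  ⨆ μ : InputDist ι X, succRdist f μ.μ γ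

/-- The fraction `q = μ(ℓ₁)/μ(ℓ)` at the leaf reached by `x`. -/
noncomputable def leafBias (f : (ι → Bool) → Bool) (μ : (ι → Bool) → ℝ)
    (t : DTree ι L) (x : ι → Bool) : ℝ :=
  mass μ (t.leafSet x ∩ {y | f y = true}) / mass μ (t.leafSet x)

/-- Hellinger loss `E[2·√(q(1-q))]` of a randomized algorithm. -/
noncomputable def helLossAlg (f : (ι → Bool) → Bool) (μ : (ι → Bool) → ℝ)
    (R : RandAlg ι L) : ℝ :=
  ∑ j, R.p j * ∑ x, μ x *
    (2 * Real.sqrt (leafBias f μ (R.T j) x * (1 - leafBias f μ (R.T j) x)))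

/-- Hellinger score `E[1 - √(q(1-q))]` of a randomized algorithm. -/
noncomputable def helScoreAlg (f : (ι → Bool) → Bool) (μ : (ι → Bool) → ℝ)
    (R : RandAlg ι L) : ℝ :=
  ∑ j, R.p j * ∑ x, μ x *
    (1 - Real.sqrt (leafBias f μ (R.T j) x * (1 - leafBias f μ (R.T j) x)))

/-- `R̄̄_{Hel↓,ε}(f)`: maximum distributional complexity at Hellinger loss `ε`. -/
noncomputable def RmaxHelLoss (X : Set (ι → Bool)) (f : (ι → Bool) → Bool) (ε : ℝ) : ℝ :=
  ⨆ μ : InputDist ι X,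
    sInf {c | ∃ R : RandAlg ι Unit, helLossAlg f μ.μ R ≤ ε ∧ expCost μ.μ R = c}

/-- `R̄̄_{Hel,γ}(f)`: maximum distributional complexity at Hellinger score `γ`. -/
noncomputable def RmaxHel (X : Set (ι → Bool)) (f : (ι → Bool) → Bool) (γ : ℝ) : ℝ :=
  ⨆ μ : InputDist ι X,
    sInf {c | ∃ R : RandAlg ι Unit, γ ≤ helScoreAlg f μ.μ R ∧ expCost μ.μ R = c}

/-- Binary entropy function. -/
noncomputable def binEnt (p : ℝ) : ℝ :=
  -(p * Real.logb 2 p) - (1 - p) * Real.logb 2 (1 - p)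

/-- Exponential-entropy score `E[1 - (1/2)·2^{-h(q)}]` of a randomized algorithm. -/
noncomputable def entScoreAlg (f : (ι → Bool) → Bool) (μ : (ι → Bool) → ℝ)
    (R : RandAlg ι L) : ℝ :=
  ∑ j, R.p j * ∑ x, μ x *
    (1 - (1 / 2) * (2:ℝ) ^ (-(binEnt (leafBias f μ (R.T j) x))))

/-- `R̄̄_{Ent,γ}(f)`: maximum distributional complexity at exponential-entropy score `γ`. -/
noncomputable def RmaxEnt (X : Set (ι → Bool)) (f : (ι → Bool) → Bool) (γ : ℝ) : ℝ :=
  ⨆ μ : InputDist ι X,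
    sInf {c | ∃ R : RandAlg ι Unit, γ ≤ entScoreAlg f μ.μ R ∧ expCost μ.μ R = c}

end Defs

section WorstCase

variable {ι L : Type}

open Classical in
/-- Worst-case randomized query complexity for a generic task: minimum, over randomized
algorithms whose leaf labels satisfy `labelOK` and which on every input `x ∈ X` output a
label `z` with `good x z` with probability at least `δ`, of the maximum leaf depth over
the trees in the support. -/
noncomputable def RwcTask (X : Set (ι → Bool)) (good : (ι → Bool) → L → Prop)
    (labelOK : L → Prop) (δ : ℝ) : ℕ :=
  sInf {d : ℕ | ∃ R : RandAlg ι L,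
    (∀ j, R.p j ≠ 0 → (R.T j).allLabels labelOK) ∧
    (∀ x ∈ X, δ ≤ ∑ j, if good x ((R.T j).out x) then R.p j else 0) ∧
    ∀ j, R.p j ≠ 0 → (R.T j).depth ≤ d}

/-- Worst-case randomized query complexity `R_δ(f)` of a (partial) Boolean function. -/
noncomputable def Rwc (X : Set (ι → Bool)) (f : (ι → Bool) → Bool) (δ : ℝ) : ℕ :=
  RwcTask X (fun x b => b = f x) (fun _ : Bool => True) δ

end WorstCase

section Product

variable {m n : ℕ} {L : Type}

/-- The `i`-th block of an input to the `n`-fold direct product. -/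
def block (x : Fin n × Fin m → Bool) (i : Fin n) : Fin m → Bool := fun j => x (i, j)

/-- The product domain `Xⁿ`. -/
def Xpow (n : ℕ) (X : Set (Fin m → Bool)) : Set (Fin n × Fin m → Bool) :=
  {x | ∀ i, block x i ∈ X}

/-- The `n`-fold direct product `fⁿ`. -/
def fpow (f : (Fin m → Bool) → Bool) (x : Fin n × Fin m → Bool) : Fin n → Bool :=
  fun i => f (block x i)

/-- The product distribution `μⁿ`. -/
noncomputable def prodMu (μ : (Fin m → Bool) → ℝ) (x : Fin n × Fin m → Bool) : ℝ :=
  ∏ i, μ (block x i)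

/-- The `i`-th factor `ℓ^(i)` of the (product) leaf reached by `x` in a decision tree for `fⁿ`. -/
def blockSet (t : DTree (Fin n × Fin m) L) (x : Fin n × Fin m → Bool) (i : Fin n) :
    Set (Fin m → Bool) :=
  {y | (fun q : Fin n × Fin m => if q.1 = i then y q.2 else x q) ∈ t.leafSet x}

/-- Score of a leaf of a tree for `fⁿ` under `μⁿ`: the product of the scores of its factors. -/
noncomputable def prodLeafScore (S : ScoreFun) (f : (Fin m → Bool) → Bool)
    (μ : (Fin m → Bool) → ℝ) (t : DTree (Fin n × Fin m) L) (x : Fin n × Fin m → Bool) : ℝ :=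
  ∏ i, S.φ (mass μ (blockSet t x i ∩ {y | f y = true}) / mass μ (blockSet t x i))

/-- Score of a randomized algorithm for `fⁿ` under `μⁿ`. -/
noncomputable def algScoreN (S : ScoreFun) (f : (Fin m → Bool) → Bool)
    (μ : (Fin m → Bool) → ℝ) (R : RandAlg (Fin n × Fin m) L) : ℝ :=
  ∑ j, R.p j * ∑ x, prodMu μ x * prodLeafScore S f μ (R.T j) x

/-- Score-weighted cost of a randomized algorithm for `fⁿ` under `μⁿ`. -/
noncomputable def scostN (S : ScoreFun) (f : (Fin m → Bool) → Bool)
    (μ : (Fin m → Bool) → ℝ) (R : RandAlg (Fin n × Fin m) L) : ℝ :=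
  (∑ j, R.p j * ∑ x, prodMu μ x * (prodLeafScore S f μ (R.T j) x * ((R.T j).cost x : ℝ))) /
    algScoreN S f μ R

/-- Discounted score of a randomized algorithm for `fⁿ` under `μⁿ`. -/
noncomputable def dScoreN (S : ScoreFun) (f : (Fin m → Bool) → Bool)
    (μ : (Fin m → Bool) → ℝ) (α : ℝ) (R : RandAlg (Fin n × Fin m) L) : ℝ :=
  ∑ j, R.p j * ∑ x, prodMu μ x *
    (prodLeafScore S f μ (R.T j) x * Real.exp (-(α * ((R.T j).cost x : ℝ))))

/-- Maximum discounted score `DS_α^{μⁿ}(fⁿ)`. -/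
noncomputable def DSN (S : ScoreFun) (f : (Fin m → Bool) → Bool)
    (μ : (Fin m → Bool) → ℝ) (α : ℝ) (n : ℕ) : ℝ :=
  ⨆ R : RandAlg (Fin n × Fin m) Unit, dScoreN S f μ α R

/-- Distributional score-weighted query complexity `sR̄̄_γ^{μⁿ}(fⁿ)`. -/
noncomputable def sRdistN (S : ScoreFun) (f : (Fin m → Bool) → Bool)
    (μ : (Fin m → Bool) → ℝ) (γ : ℝ) (n : ℕ) : ℝ :=
  sInf {c | ∃ R : RandAlg (Fin n × Fin m) Unit,
    γ ≤ algScoreN S f μ R ∧ scostN S f μ R = c}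

/-- Worst-case randomized query complexity `R_δ(fⁿ)` of computing `fⁿ` exactly. -/
noncomputable def RwcN (X : Set (Fin m → Bool)) (f : (Fin m → Bool) → Bool)
    (n : ℕ) (δ : ℝ) : ℕ :=
  RwcTask (Xpow n X) (fun x z => z = fpow f x) (fun _ : Fin n → Bool => True) δ

/-- Success-probability score `max_z μ(ℓ ∩ (fⁿ)⁻¹(z))/μ(ℓ)` of a leaf of a tree for `fⁿ`
under an arbitrary distribution `μ` on `Xⁿ`. -/
noncomputable def succLeafScoreN (f : (Fin m → Bool) → Bool)
    (μ : (Fin n × Fin m → Bool) → ℝ) (t : DTree (Fin n × Fin m) L)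
    (x : Fin n × Fin m → Bool) : ℝ :=
  (⨆ z : Fin n → Bool, mass μ (t.leafSet x ∩ {y | fpow f y = z})) / mass μ (t.leafSet x)

/-- Success-probability score of a randomized algorithm for `fⁿ`. -/
noncomputable def succAlgScoreN (f : (Fin m → Bool) → Bool)
    (μ : (Fin n × Fin m → Bool) → ℝ) (R : RandAlg (Fin n × Fin m) L) : ℝ :=
  ∑ j, R.p j * ∑ x, μ x * succLeafScoreN f μ (R.T j) x

/-- Score-weighted cost of a randomized algorithm for `fⁿ` (success-probability score). -/
noncomputable def succScostN (f : (Fin m → Bool) → Bool)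
    (μ : (Fin n × Fin m → Bool) → ℝ) (R : RandAlg (Fin n × Fin m) L) : ℝ :=
  (∑ j, R.p j * ∑ x, μ x * (succLeafScoreN f μ (R.T j) x * ((R.T j).cost x : ℝ))) /
    succAlgScoreN f μ R

/-- Maximum score-weighted distributional query complexity `sR̄̄_δ(fⁿ)`
(success-probability score). -/
noncomputable def succSRmaxN (X : Set (Fin m → Bool)) (f : (Fin m → Bool) → Bool)
    (n : ℕ) (δ : ℝ) : ℝ :=
  ⨆ μ : InputDist (Fin n × Fin m) (Xpow n X),
    sInf {c | ∃ R : RandAlg (Fin n × Fin m) Unit,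
      δ ≤ succAlgScoreN f μ.μ R ∧ succScostN f μ.μ R = c}

/-- Worst-case randomized query complexity of the list-decoding task `LD_ℓⁿ ∘ f`. -/
noncomputable def RwcLD (X : Set (Fin m → Bool)) (f : (Fin m → Bool) → Bool)
    (n ℓ : ℕ) (δ : ℝ) : ℕ :=
  RwcTask (Xpow n X) (fun x S => fpow f x ∈ S)
    (fun S : Finset (Fin n → Bool) => S.card = 2 ^ (n - ℓ)) δ

open Classical in
/-- Worst-case randomized query complexity of the threshold task `Thr_kⁿ ∘ f`. -/
noncomputable def RwcThr (X : Set (Fin m → Bool)) (f : (Fin m → Bool) → Bool)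
    (n k : ℕ) (δ : ℝ) : ℕ :=
  RwcTask (Xpow n X)
    (fun x z => k ≤ (Finset.univ.filter fun i => z i = fpow f x i).card)
    (fun _ : Fin n → Bool => True) δ

open Classical in
/-- Worst-case randomized query complexity of the labelled threshold task `Label_kⁿ ∘ f`. -/
noncomputable def RwcLabel (X : Set (Fin m → Bool)) (f : (Fin m → Bool) → Bool)
    (n k : ℕ) (δ : ℝ) : ℕ :=
  RwcTask (Xpow n X)
    (fun x z => ∀ i b, z i = some b → fpow f x i = b)
    (fun z : Fin n → Option Bool =>
      (Finset.univ.filter fun i => (z i).isSome).card = k) δ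

end Product
/- ========================================================================
   Auxiliary development for Hellinger loss boosting.
   ======================================================================== -/

section HLBAux

variable {ι : Type} [Fintype ι] [DecidableEq ι]

/-- Restriction of a weight function to inputs with `y i = b`. -/
def hres (w : (ι → Bool) → ℝ) (i : ι) (b : Bool) : (ι → Bool) → ℝ :=
  fun y => if y i = b then w y else 0

lemma hres_nonneg {w : (ι → Bool) → ℝ} (hw : ∀ x, 0 ≤ w x) (i : ι) (b : Bool) :
    ∀ x, 0 ≤ hres w i b x := fun x => by
  unfold hres; split
  · exact hw x
  · exact le_rfl

/-- Hellinger loss of a single deterministic tree. -/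
noncomputable def detHel (f : (ι → Bool) → Bool) (w : (ι → Bool) → ℝ) (t : DTree ι Unit) : ℝ :=
  ∑ x, w x * (2 * Real.sqrt (leafBias f w t x * (1 - leafBias f w t x)))

/-- Expected cost of a single deterministic tree. -/
noncomputable def detCost (w : (ι → Bool) → ℝ) (t : DTree ι Unit) : ℝ :=
  ∑ x, w x * (t.cost x : ℝ)

lemma helLossAlg_def (f : (ι → Bool) → Bool) (w : (ι → Bool) → ℝ) (R : RandAlg ι Unit) :
    helLossAlg f w R = ∑ j, R.p j * detHel f w (R.T j) := rfl

lemma expCost_def (w : (ι → Bool) → ℝ) (R : RandAlg ι Unit) :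
    expCost w R = ∑ j, R.p j * detCost w (R.T j) := rfl

lemma expCost_nonneg (w : (ι → Bool) → ℝ) (hw : ∀ x, 0 ≤ w x) (R : RandAlg ι Unit) :
    0 ≤ expCost w R :=
  Finset.sum_nonneg fun j _ => mul_nonneg (R.p_nonneg j)
    (Finset.sum_nonneg fun x _ => mul_nonneg (hw x) (Nat.cast_nonneg _))

lemma expCost_le_pointwise (w v : (ι → Bool) → ℝ) (c : ℝ)
    (h : ∀ x, w x ≤ c * v x) (R : RandAlg ι Unit) :
    expCost w R ≤ c * expCost v R := by
  rw [expCost_def, expCost_def, Finset.mul_sum]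
  refine Finset.sum_le_sum fun j _ => ?_
  have hd : detCost w (R.T j) ≤ c * detCost v (R.T j) := by
    unfold detCost
    rw [Finset.mul_sum]
    refine Finset.sum_le_sum fun x _ => ?_
    calc w x * ((R.T j).cost x : ℝ) ≤ (c * v x) * ((R.T j).cost x : ℝ) :=
          mul_le_mul_of_nonneg_right (h x) (Nat.cast_nonneg _)
      _ = c * (v x * ((R.T j).cost x : ℝ)) := by ring
  calc R.p j * detCost w (R.T j) ≤ R.p j * (c * detCost v (R.T j)) :=
        mul_le_mul_of_nonneg_left hd (R.p_nonneg j)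
    _ = c * (R.p j * detCost v (R.T j)) := by ring

lemma mass_res (w : (ι → Bool) → ℝ) (i : ι) (b : Bool) (S : Set (ι → Bool)) :
    mass w ({y : ι → Bool | y i = b} ∩ S) = mass (hres w i b) S := by
  unfold mass
  refine Finset.sum_congr rfl fun x _ => ?_
  by_cases hS : x ∈ S
  · by_cases hb : x i = b
    · rw [Set.indicator_of_mem (show x ∈ {y : ι → Bool | y i = b} ∩ S from ⟨hb, hS⟩) w, Set.indicator_of_mem hS]
      simp [hres, hb]
    · rw [Set.indicator_of_notMem (fun h => hb h.1) w, Set.indicator_of_mem hS]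
      simp [hres, hb]
  · rw [Set.indicator_of_notMem (fun h => hS h.2) w, Set.indicator_of_notMem hS]

lemma leafBias_node (f : (ι → Bool) → Bool) (w : (ι → Bool) → ℝ) (i : ι)
    (t0 t1 : DTree ι Unit) (x : ι → Bool) (b : Bool) (hx : x i = b) :
    leafBias f w (.node i t0 t1) x = leafBias f (hres w i b) (if b then t1 else t0) x := by
  have hset : (DTree.node i t0 t1).leafSet x
      = {y : ι → Bool | y i = b} ∩ (if b then t1 else t0).leafSet x := by
    simp only [DTree.leafSet, hx]
    cases b <;> simp
  unfold leafBias
  rw [hset, Set.inter_assoc, mass_res, mass_res]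

lemma detHel_node (f : (ι → Bool) → Bool) (w : (ι → Bool) → ℝ) (i : ι) (t0 t1 : DTree ι Unit) :
    detHel f w (.node i t0 t1) = detHel f (hres w i false) t0 + detHel f (hres w i true) t1 := by
  unfold detHel
  rw [← Finset.sum_add_distrib]
  refine Finset.sum_congr rfl fun x _ => ?_
  cases hx : x i
  · rw [leafBias_node f w i t0 t1 x false hx]
    simp [hres, hx]
  · rw [leafBias_node f w i t0 t1 x true hx]
    simp [hres, hx]

lemma detCost_node (w : (ι → Bool) → ℝ) (i : ι) (t0 t1 : DTree ι Unit) :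
    detCost w (.node i t0 t1)
      = (∑ x, w x) + (detCost (hres w i false) t0 + detCost (hres w i true) t1) := by
  unfold detCost
  rw [← Finset.sum_add_distrib, ← Finset.sum_add_distrib]
  refine Finset.sum_congr rfl fun x _ => ?_
  cases hx : x i <;> simp [DTree.cost, hres, hx] <;> push_cast <;> ring

lemma hres_add (w : (ι → Bool) → ℝ) (i : ι) :
    (∑ x, hres w i false x) + (∑ x, hres w i true x) = ∑ x, w x := by
  rw [← Finset.sum_add_distrib]
  refine Finset.sum_congr rfl fun x _ => ?_
  cases hx : x i <;> simp [hres, hx]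

lemma sum_split_f (f : (ι → Bool) → Bool) (w : (ι → Bool) → ℝ) :
    ∑ x, w x = (∑ x, if f x then 0 else w x) + (∑ x, if f x then w x else 0) := by
  rw [← Finset.sum_add_distrib]
  refine Finset.sum_congr rfl fun x _ => ?_
  by_cases h : f x = true <;> simp [h]

lemma mass_f (f : (ι → Bool) → Bool) (w : (ι → Bool) → ℝ) :
    mass w {y | f y = true} = ∑ x, if f x then w x else 0 := by
  unfold mass
  refine Finset.sum_congr rfl fun x _ => ?_
  by_cases h : f x = true
  · rw [Set.indicator_of_mem (show x ∈ {y | f y = true} from h)]; simp [h]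
  · rw [Set.indicator_of_notMem (show x ∉ {y | f y = true} from h)]; simp [h]

/-- Total Hellinger affinity mass of the leaves of a tree. -/
noncomputable def helMass (f : (ι → Bool) → Bool) : DTree ι Unit → ((ι → Bool) → ℝ) → ℝ
  | .leaf _, w => 2 * Real.sqrt ((∑ x, if f x then 0 else w x) * (∑ x, if f x then w x else 0))
  | .node i t0 t1, w => helMass f t0 (hres w i false) + helMass f t1 (hres w i true)

lemma helMass_leaf (f : (ι → Bool) → Bool) (lab : Unit) (w : (ι → Bool) → ℝ) :
    helMass f (.leaf lab) w
      = 2 * Real.sqrt ((∑ x, if f x then 0 else w x) * (∑ x, if f x then w x else 0)) := by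
  simp [helMass]

lemma helMass_node (f : (ι → Bool) → Bool) (i : ι) (t0 t1 : DTree ι Unit) (w : (ι → Bool) → ℝ) :
    helMass f (.node i t0 t1) w = helMass f t0 (hres w i false) + helMass f t1 (hres w i true) := by
  simp [helMass]

lemma detHel_eq_helMass (f : (ι → Bool) → Bool) :
    ∀ (t : DTree ι Unit) (w : (ι → Bool) → ℝ), (∀ x, 0 ≤ w x) → detHel f w t = helMass f t w := by
  intro t
  induction t with
  | leaf lab =>
    intro w hw
    have ha : (0:ℝ) ≤ ∑ x, if f x then 0 else w x :=
      Finset.sum_nonneg fun x _ => by by_cases h : f x = true <;> simp [h, hw x]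
    have hb : (0:ℝ) ≤ ∑ x, if f x then w x else 0 :=
      Finset.sum_nonneg fun x _ => by by_cases h : f x = true <;> simp [h, hw x]
    set a := ∑ x, if f x then 0 else w x with ha_def
    set b := ∑ x, if f x then w x else 0 with hb_def
    have hsum : ∑ x, w x = a + b := sum_split_f f w
    have hbias : ∀ x : ι → Bool, leafBias f w (.leaf lab) x = b / (a + b) := by
      intro x
      unfold leafBias
      have h1 : (DTree.leaf lab : DTree ι Unit).leafSet x = Set.univ := rfl
      rw [h1, Set.univ_inter, mass_f, ← hb_def]
      have h2 : mass w Set.univ = a + b := by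
        unfold mass; rw [Set.indicator_univ]; exact hsum
      rw [h2]
    rw [helMass_leaf, ← ha_def, ← hb_def]
    rcases eq_or_lt_of_le (add_nonneg ha hb) with h0 | hpos
    · have hw0 : ∀ x ∈ Finset.univ, w x = 0 :=
        (Finset.sum_eq_zero_iff_of_nonneg (fun x _ => hw x)).1 (hsum.trans h0.symm)
      have hA : a = 0 := le_antisymm (by linarith) ha
      rw [hA, zero_mul, Real.sqrt_zero, mul_zero]
      exact Finset.sum_eq_zero fun x hx => by rw [hw0 x hx, zero_mul]
    · unfold detHel
      have hq : ∀ x : ι → Bool,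
          leafBias f w (.leaf lab) x * (1 - leafBias f w (.leaf lab) x) = a * b / (a + b) ^ 2 := by
        intro x
        rw [hbias x]
        field_simp
        ring
      have hs : Real.sqrt (a * b / (a + b) ^ 2) = Real.sqrt (a * b) / (a + b) := by
        rw [Real.sqrt_div (mul_nonneg ha hb), Real.sqrt_sq hpos.le]
      calc ∑ x, w x * (2 * Real.sqrt (leafBias f w (.leaf lab) x * (1 - leafBias f w (.leaf lab) x)))
          = ∑ x, w x * (2 * (Real.sqrt (a * b) / (a + b))) := by
            refine Finset.sum_congr rfl fun x _ => ?_
            rw [hq x, hs]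
        _ = (∑ x, w x) * (2 * (Real.sqrt (a * b) / (a + b))) := by rw [← Finset.sum_mul]
        _ = 2 * Real.sqrt (a * b) := by
            rw [hsum]
            field_simp
  | node i t0 t1 ih0 ih1 =>
    intro w hw
    rw [detHel_node, helMass_node, ih0 _ (hres_nonneg hw i false), ih1 _ (hres_nonneg hw i true)]

lemma helMass_tilt (f : (ι → Bool) → Bool) (r s : ℝ) (hr : 0 ≤ r) (hs : 0 ≤ s) :
    ∀ (t : DTree ι Unit) (w : (ι → Bool) → ℝ),
      helMass f t (fun x => (if f x then r else s) * w x) = Real.sqrt (r * s) * helMass f t w := by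
  intro t
  induction t with
  | leaf lab =>
    intro w
    rw [helMass_leaf, helMass_leaf]
    have h1 : (∑ x, if f x then 0 else (if f x then r else s) * w x)
        = s * ∑ x, if f x then 0 else w x := by
      rw [Finset.mul_sum]
      refine Finset.sum_congr rfl fun x _ => ?_
      by_cases h : f x = true <;> simp [h]
    have h2 : (∑ x, if f x then (if f x then r else s) * w x else 0)
        = r * ∑ x, if f x then w x else 0 := by
      rw [Finset.mul_sum]
      refine Finset.sum_congr rfl fun x _ => ?_
      by_cases h : f x = true <;> simp [h]
    rw [h1, h2]
    rw [show (s * ∑ x, if f x then 0 else w x) * (r * ∑ x, if f x then w x else 0)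
        = (r * s) * ((∑ x, if f x then 0 else w x) * (∑ x, if f x then w x else 0)) from by ring]
    rw [Real.sqrt_mul (mul_nonneg hr hs)]
    ring
  | node i t0 t1 ih0 ih1 =>
    intro w
    have e0 : hres (fun x => (if f x then r else s) * w x) i false
        = fun x => (if f x then r else s) * hres w i false x := by
      funext y; by_cases h : y i = false <;> simp [hres, h]
    have e1 : hres (fun x => (if f x then r else s) * w x) i true
        = fun x => (if f x then r else s) * hres w i true x := by
      funext y; by_cases h : y i = true <;> simp [hres, h]
    rw [helMass_node, helMass_node, e0, e1, ih0, ih1]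
    ring

lemma helLossAlg_tilt (f : (ι → Bool) → Bool) (ν : (ι → Bool) → ℝ) (hν : ∀ x, 0 ≤ ν x)
    (r s : ℝ) (hr : 0 ≤ r) (hs : 0 ≤ s) (R : RandAlg ι Unit) :
    helLossAlg f (fun x => (if f x then r else s) * ν x) R
      = Real.sqrt (r * s) * helLossAlg f ν R := by
  have hcoef : ∀ x : ι → Bool, 0 ≤ (if f x then r else s) := fun x => by
    by_cases h : f x = true <;> simp [h, hr, hs]
  rw [helLossAlg_def, helLossAlg_def, Finset.mul_sum]
  refine Finset.sum_congr rfl fun j _ => ?_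
  rw [detHel_eq_helMass f _ _ (fun x => mul_nonneg (hcoef x) (hν x)),
    helMass_tilt f r s hr hs, detHel_eq_helMass f _ _ hν]
  ring

end HLBAux

section HLBAux2

set_option linter.unusedSectionVars false

variable {ι : Type} [Fintype ι] [DecidableEq ι]

/-- Build a randomized algorithm from a finitely-indexed family. -/
noncomputable def ofFintype {J : Type} [Fintype J] (p : J → ℝ) (T : J → DTree ι Unit)
    (h0 : ∀ j, 0 ≤ p j) (h1 : ∑ j, p j = 1) : RandAlg ι Unit where
  k := Fintype.card J
  p := fun i => p ((Fintype.equivFin J).symm i)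
  T := fun i => T ((Fintype.equivFin J).symm i)
  p_nonneg := fun i => h0 _
  p_sum := by rw [Equiv.sum_comp (Fintype.equivFin J).symm p]; exact h1

lemma ofFintype_eval {J : Type} [Fintype J] (p : J → ℝ) (T : J → DTree ι Unit)
    (h0 : ∀ j, 0 ≤ p j) (h1 : ∑ j, p j = 1) (Φ : DTree ι Unit → ℝ) :
    (∑ j, (ofFintype p T h0 h1).p j * Φ ((ofFintype p T h0 h1).T j)) = ∑ j : J, p j * Φ (T j) :=
  Equiv.sum_comp (Fintype.equivFin J).symm fun j => p j * Φ (T j)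

/-- Mix two randomized algorithms below a root query node. -/
noncomputable def nodeMix (i : ι) (R0 R1 : RandAlg ι Unit) : RandAlg ι Unit :=
  ofFintype (fun ab : Fin R0.k × Fin R1.k => R0.p ab.1 * R1.p ab.2)
    (fun ab => .node i (R0.T ab.1) (R1.T ab.2))
    (fun ab => mul_nonneg (R0.p_nonneg _) (R1.p_nonneg _))
    (by
      rw [Fintype.sum_prod_type]
      simp_rw [← Finset.mul_sum, R1.p_sum, mul_one]
      exact R0.p_sum)

lemma eval_nodeMix (i : ι) (R0 R1 : RandAlg ι Unit) (Φ : DTree ι Unit → ℝ) :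
    (∑ j, (nodeMix i R0 R1).p j * Φ ((nodeMix i R0 R1).T j))
      = ∑ a, ∑ b, R0.p a * R1.p b * Φ (.node i (R0.T a) (R1.T b)) := by
  unfold nodeMix
  rw [ofFintype_eval, Fintype.sum_prod_type]

/-- Mixture of a family of randomized algorithms. -/
noncomputable def mixAlg (R : RandAlg ι Unit) (F : Fin R.k → RandAlg ι Unit) : RandAlg ι Unit :=
  ofFintype (fun s : Σ j : Fin R.k, Fin (F j).k => R.p s.1 * (F s.1).p s.2)
    (fun s => (F s.1).T s.2)
    (fun s => mul_nonneg (R.p_nonneg _) ((F s.1).p_nonneg _))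
    (by
      rw [← Finset.univ_sigma_univ, Finset.sum_sigma]
      refine Eq.trans (Finset.sum_congr rfl fun j _ => ?_) R.p_sum
      show (∑ s : Fin (F j).k, R.p j * (F j).p s) = R.p j
      rw [← Finset.mul_sum, (F j).p_sum, mul_one])

lemma eval_mixAlg (R : RandAlg ι Unit) (F : Fin R.k → RandAlg ι Unit) (Φ : DTree ι Unit → ℝ) :
    (∑ j, (mixAlg R F).p j * Φ ((mixAlg R F).T j))
      = ∑ j, R.p j * ∑ a, (F j).p a * Φ ((F j).T a) := by
  unfold mixAlg
  rw [ofFintype_eval, ← Finset.univ_sigma_univ, Finset.sum_sigma]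
  refine Finset.sum_congr rfl fun j _ => ?_
  rw [Finset.mul_sum]
  exact Finset.sum_congr rfl fun a _ => by ring

lemma sum_mul_helper {n : ℕ} (q : Fin n → ℝ) (hq : ∑ b, q b = 1) (c : ℝ) :
    ∑ b, q b * c = c := by
  rw [← Finset.sum_mul, hq, one_mul]

lemma helLossAlg_nodeMix (f : (ι → Bool) → Bool) (w : (ι → Bool) → ℝ) (i : ι)
    (R0 R1 : RandAlg ι Unit) :
    helLossAlg f w (nodeMix i R0 R1)
      = helLossAlg f (hres w i false) R0 + helLossAlg f (hres w i true) R1 := by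
  rw [helLossAlg_def, eval_nodeMix]
  have step : ∀ a : Fin R0.k,
      (∑ b : Fin R1.k, R0.p a * R1.p b * detHel f w (.node i (R0.T a) (R1.T b)))
      = R0.p a * detHel f (hres w i false) (R0.T a)
        + R0.p a * ∑ b, R1.p b * detHel f (hres w i true) (R1.T b) := by
    intro a
    have key : ∀ b : Fin R1.k, R0.p a * R1.p b * detHel f w (.node i (R0.T a) (R1.T b))
        = R1.p b * (R0.p a * detHel f (hres w i false) (R0.T a))
          + R0.p a * (R1.p b * detHel f (hres w i true) (R1.T b)) := by
      intro b
      rw [detHel_node]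
      ring
    rw [Finset.sum_congr rfl fun b _ => key b, Finset.sum_add_distrib,
      sum_mul_helper R1.p R1.p_sum, ← Finset.mul_sum]
  rw [Finset.sum_congr rfl fun a _ => step a, Finset.sum_add_distrib,
    sum_mul_helper R0.p R0.p_sum, helLossAlg_def, helLossAlg_def]

lemma expCost_nodeMix (w : (ι → Bool) → ℝ) (i : ι) (R0 R1 : RandAlg ι Unit) :
    expCost w (nodeMix i R0 R1)
      = (∑ x, w x) + (expCost (hres w i false) R0 + expCost (hres w i true) R1) := by
  rw [expCost_def, eval_nodeMix]
  have step : ∀ a : Fin R0.k,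
      (∑ b : Fin R1.k, R0.p a * R1.p b * detCost w (.node i (R0.T a) (R1.T b)))
      = R0.p a * (∑ x, w x)
        + (R0.p a * detCost (hres w i false) (R0.T a)
          + R0.p a * ∑ b, R1.p b * detCost (hres w i true) (R1.T b)) := by
    intro a
    have key : ∀ b : Fin R1.k, R0.p a * R1.p b * detCost w (.node i (R0.T a) (R1.T b))
        = R1.p b * (R0.p a * (∑ x, w x))
          + (R1.p b * (R0.p a * detCost (hres w i false) (R0.T a))
            + R0.p a * (R1.p b * detCost (hres w i true) (R1.T b))) := by
      intro b
      rw [detCost_node]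
      ring
    rw [Finset.sum_congr rfl fun b _ => key b, Finset.sum_add_distrib, Finset.sum_add_distrib,
      sum_mul_helper R1.p R1.p_sum, sum_mul_helper R1.p R1.p_sum, ← Finset.mul_sum]
  rw [Finset.sum_congr rfl fun a _ => step a, Finset.sum_add_distrib, Finset.sum_add_distrib,
    sum_mul_helper R0.p R0.p_sum, sum_mul_helper R0.p R0.p_sum, expCost_def, expCost_def]

end HLBAux2

section HLBAux3

set_option linter.unusedSectionVars false

variable {ι : Type} [Fintype ι] [DecidableEq ι]

/-- Graft a path-indexed family of randomized algorithms onto the leaves of a tree. -/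
noncomputable def graftD : DTree ι Unit → (List (ι × Bool) → RandAlg ι Unit) → RandAlg ι Unit
  | .leaf _, g => g []
  | .node i t0 t1, g =>
      nodeMix i (graftD t0 fun p => g ((i, false) :: p)) (graftD t1 fun p => g ((i, true) :: p))

lemma graftD_leaf (lab : Unit) (g : List (ι × Bool) → RandAlg ι Unit) :
    graftD (.leaf lab) g = g [] := by simp [graftD]

lemma graftD_node (i : ι) (t0 t1 : DTree ι Unit) (g : List (ι × Bool) → RandAlg ι Unit) :
    graftD (.node i t0 t1) g
      = nodeMix i (graftD t0 fun p => g ((i, false) :: p)) (graftD t1 fun p => g ((i, true) :: p)) := by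
  simp [graftD]

/-- Weight restricted to the subcube described by a list of fixed coordinates. -/
def pathW (w : (ι → Bool) → ℝ) (p : List (ι × Bool)) : (ι → Bool) → ℝ :=
  fun y => if p.all (fun q => y q.1 == q.2) then w y else 0

lemma pathW_nil (w : (ι → Bool) → ℝ) : pathW w [] = w := funext fun y => by simp [pathW]

lemma pathW_cons (w : (ι → Bool) → ℝ) (i : ι) (b : Bool) (p : List (ι × Bool)) :
    pathW w ((i, b) :: p) = pathW (hres w i b) p := by
  funext y
  simp only [pathW, List.all_cons, hres]
  by_cases h : y i = b
  · simp [h]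
  · have hb : (y i == b) = false := by simp [h]
    simp [hb, h]

lemma pathW_nonneg {w : (ι → Bool) → ℝ} (hw : ∀ x, 0 ≤ w x) (p : List (ι × Bool)) :
    ∀ x, 0 ≤ pathW w p x := fun x => by
  unfold pathW; split
  · exact hw x
  · exact le_rfl

lemma master_hel (f : (ι → Bool) → Bool) (β : ℝ) :
    ∀ (D : DTree ι Unit) (w : (ι → Bool) → ℝ) (g : List (ι × Bool) → RandAlg ι Unit),
      (∀ x, 0 ≤ w x) →
      (∀ p, helLossAlg f (pathW w p) (g p) ≤ β * helMass f (.leaf ()) (pathW w p)) →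
      helLossAlg f w (graftD D g) ≤ β * helMass f D w := by
  intro D
  induction D with
  | leaf lab =>
    intro w g hw hg
    have h := hg []
    rw [pathW_nil] at h
    rw [graftD_leaf, helMass_leaf]
    rw [helMass_leaf] at h
    exact h
  | node i t0 t1 ih0 ih1 =>
    intro w g hw hg
    rw [graftD_node, helLossAlg_nodeMix, helMass_node, mul_add]
    have h0 := ih0 (hres w i false) (fun p => g ((i, false) :: p)) (hres_nonneg hw i false)
      (fun p => by rw [← pathW_cons]; exact hg ((i, false) :: p))
    have h1 := ih1 (hres w i true) (fun p => g ((i, true) :: p)) (hres_nonneg hw i true)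
      (fun p => by rw [← pathW_cons]; exact hg ((i, true) :: p))
    exact add_le_add h0 h1

lemma master_cost (C : ℝ) :
    ∀ (D : DTree ι Unit) (w : (ι → Bool) → ℝ) (g : List (ι × Bool) → RandAlg ι Unit),
      (∀ x, 0 ≤ w x) →
      (∀ p, expCost (pathW w p) (g p) ≤ C * ∑ x, pathW w p x) →
      expCost w (graftD D g) ≤ detCost w D + C * ∑ x, w x := by
  intro D
  induction D with
  | leaf lab =>
    intro w g hw hg
    have h := hg []
    rw [pathW_nil] at h
    rw [graftD_leaf]
    have hd : detCost w (.leaf lab : DTree ι Unit) = 0 := by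
      simp [detCost, DTree.cost]
    rw [hd, zero_add]
    exact h
  | node i t0 t1 ih0 ih1 =>
    intro w g hw hg
    rw [graftD_node, expCost_nodeMix, detCost_node]
    have h0 := ih0 (hres w i false) (fun p => g ((i, false) :: p)) (hres_nonneg hw i false)
      (fun p => by rw [← pathW_cons]; exact hg ((i, false) :: p))
    have h1 := ih1 (hres w i true) (fun p => g ((i, true) :: p)) (hres_nonneg hw i true)
      (fun p => by rw [← pathW_cons]; exact hg ((i, true) :: p))
    have hsplit : C * ∑ x, w x
        = C * (∑ x, hres w i false x) + C * (∑ x, hres w i true x) := by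
      rw [← hres_add w i, mul_add]
    linarith

/-- The trivial (zero-query) algorithm. -/
noncomputable def trivAlg : RandAlg ι Unit :=
  ⟨1, fun _ => 1, fun _ => .leaf (), fun _ => zero_le_one, by simp⟩

lemma helLossAlg_triv (f : (ι → Bool) → Bool) (u : (ι → Bool) → ℝ) :
    helLossAlg f u (trivAlg : RandAlg ι Unit) = detHel f u (.leaf ()) := by
  rw [helLossAlg_def]
  show ∑ _j : Fin 1, (1:ℝ) * detHel f u (.leaf ()) = _
  simp [trivAlg]

lemma expCost_triv (u : (ι → Bool) → ℝ) : expCost u (trivAlg : RandAlg ι Unit) = 0 := by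
  rw [expCost_def]
  simp [trivAlg, detCost, DTree.cost]

/-- Full decision tree querying all the coordinates in the list. -/
def fullTree : List ι → DTree ι Unit
  | [] => .leaf ()
  | i :: l => .node i (fullTree l) (fullTree l)

lemma cost_fullTree : ∀ (l : List ι) (x : ι → Bool), (fullTree l).cost x = l.length := by
  intro l
  induction l with
  | nil => intro x; simp [fullTree, DTree.cost]
  | cons i l ih => intro x; simp [fullTree, DTree.cost, ih x]

lemma leafSet_fullTree : ∀ (l : List ι) (x : ι → Bool),
    (fullTree l).leafSet x = {y : ι → Bool | ∀ i ∈ l, y i = x i} := by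
  intro l
  induction l with
  | nil =>
    intro x
    show Set.univ = _
    ext y; simp
  | cons i l ih =>
    intro x
    show ({y : ι → Bool | y i = x i} ∩ (if x i then (fullTree l).leafSet x else (fullTree l).leafSet x)) = _
    rw [ite_self, ih x]
    ext y
    simp only [Set.mem_inter_iff, Set.mem_setOf_eq, List.mem_cons]
    constructor
    · rintro ⟨h1, h2⟩ j hj
      rcases hj with rfl | hj
      · exact h1
      · exact h2 j hj
    · intro h
      exact ⟨h i (Or.inl rfl), fun j hj => h j (Or.inr hj)⟩

lemma mass_singleton (w : (ι → Bool) → ℝ) (x : ι → Bool) :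
    mass w ({x} : Set (ι → Bool)) = w x := by
  unfold mass
  have h : ∀ y : ι → Bool, Set.indicator ({x} : Set (ι → Bool)) w y = if y = x then w y else 0 := by
    intro y
    by_cases h : y = x <;> simp [Set.indicator, h]
  rw [Finset.sum_congr rfl fun y _ => h y, Finset.sum_ite_eq' Finset.univ x w]
  simp

lemma mass_empty (w : (ι → Bool) → ℝ) : mass w (∅ : Set (ι → Bool)) = 0 := by
  simp [mass]

lemma detHel_full (f : (ι → Bool) → Bool) (w : (ι → Bool) → ℝ) :
    detHel f w (fullTree (Finset.univ.toList : List ι)) = 0 := by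
  unfold detHel
  refine Finset.sum_eq_zero fun x _ => ?_
  suffices h : leafBias f w (fullTree (Finset.univ.toList : List ι)) x
      * (1 - leafBias f w (fullTree (Finset.univ.toList : List ι)) x) = 0 by
    rw [h, Real.sqrt_zero, mul_zero, mul_zero]
  have hls : (fullTree (Finset.univ.toList : List ι)).leafSet x = {x} := by
    rw [leafSet_fullTree]
    ext y
    simp only [Set.mem_setOf_eq, Finset.mem_toList, Finset.mem_univ, true_implies,
      Set.mem_singleton_iff]
    constructor
    · intro h; funext i; exact h i
    · intro h i; rw [h]
  unfold leafBias
  rw [hls]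
  by_cases hf : f x = true
  · have hint : ({x} : Set (ι → Bool)) ∩ {y | f y = true} = {x} :=
      Set.inter_eq_left.mpr (Set.singleton_subset_iff.mpr hf)
    rw [hint, mass_singleton]
    rcases eq_or_ne (w x) 0 with h0 | h0
    · rw [h0]; simp
    · have h1 : w x / w x = 1 := div_self h0
      rw [h1]; ring
  · have hint : ({x} : Set (ι → Bool)) ∩ {y | f y = true} = ∅ := by
      ext y
      simp only [Set.mem_inter_iff, Set.mem_singleton_iff, Set.mem_setOf_eq,
        Set.mem_empty_iff_false, iff_false, not_and]
      rintro rfl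
      exact hf
    rw [hint, mass_empty, zero_div]
    ring

/-- The full-query algorithm. -/
noncomputable def fullAlg : RandAlg ι Unit :=
  ⟨1, fun _ => 1, fun _ => fullTree (Finset.univ.toList : List ι), fun _ => zero_le_one, by simp⟩

lemma helLossAlg_fullAlg (f : (ι → Bool) → Bool) (w : (ι → Bool) → ℝ) :
    helLossAlg f w (fullAlg : RandAlg ι Unit) = 0 := by
  rw [helLossAlg_def]
  simp [fullAlg, detHel_full]

lemma expCost_fullAlg (w : (ι → Bool) → ℝ) (h1 : ∑ x, w x = 1) :
    expCost w (fullAlg : RandAlg ι Unit) = (Fintype.card ι : ℝ) := by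
  rw [expCost_def]
  show ∑ _j : Fin 1, (1:ℝ) * detCost w (fullTree (Finset.univ.toList : List ι)) = _
  simp only [fullAlg, Fin.sum_univ_one, one_mul]
  unfold detCost
  have hc : ∀ x : ι → Bool, ((fullTree (Finset.univ.toList : List ι)).cost x : ℝ)
      = (Fintype.card ι : ℝ) := by
    intro x
    rw [cost_fullTree]
    simp [Finset.length_toList]
  rw [Finset.sum_congr rfl fun x _ => by rw [hc x], ← Finset.sum_mul, h1, one_mul]

/-- The set of achievable expected costs at Hellinger loss at most `γ`. -/
def lossSet (f : (ι → Bool) → Bool) (w : (ι → Bool) → ℝ) (γ : ℝ) : Set ℝ :=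
  {c | ∃ R : RandAlg ι Unit, helLossAlg f w R ≤ γ ∧ expCost w R = c}

lemma RmaxHelLoss_eq (X : Set (ι → Bool)) (f : (ι → Bool) → Bool) (γ : ℝ) :
    RmaxHelLoss X f γ = ⨆ μ : InputDist ι X, sInf (lossSet f μ.μ γ) := rfl

lemma lossSet_full_mem {X : Set (ι → Bool)} (f : (ι → Bool) → Bool) {γ : ℝ} (hγ : 0 ≤ γ)
    (μ : InputDist ι X) : ((Fintype.card ι : ℝ)) ∈ lossSet f μ.μ γ :=
  ⟨fullAlg, by rw [helLossAlg_fullAlg]; exact hγ, expCost_fullAlg μ.μ μ.sum_one⟩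

lemma lossSet_bdd {X : Set (ι → Bool)} (f : (ι → Bool) → Bool) (γ : ℝ) (μ : InputDist ι X) :
    BddBelow (lossSet f μ.μ γ) :=
  ⟨0, fun c hc => by
    obtain ⟨R, _, h⟩ := hc
    exact h ▸ expCost_nonneg μ.μ μ.nonneg R⟩

lemma sInf_lossSet_le_Rmax (X : Set (ι → Bool)) (f : (ι → Bool) → Bool) {γ : ℝ} (hγ : 0 ≤ γ)
    (μ : InputDist ι X) : sInf (lossSet f μ.μ γ) ≤ RmaxHelLoss X f γ := by
  rw [RmaxHelLoss_eq]
  refine le_ciSup (f := fun ν : InputDist ι X => sInf (lossSet f ν.μ γ)) ⟨(Fintype.card ι : ℝ), ?_⟩ μ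
  rintro y ⟨ν, rfl⟩
  exact csInf_le (lossSet_bdd f γ ν) (lossSet_full_mem f hγ ν)

lemma Rmax_nonneg (X : Set (ι → Bool)) (f : (ι → Bool) → Bool) (γ : ℝ) :
    0 ≤ RmaxHelLoss X f γ := by
  rw [RmaxHelLoss_eq]
  refine Real.iSup_nonneg fun μ => Real.sInf_nonneg fun c hc => ?_
  obtain ⟨R, _, h⟩ := hc
  exact h ▸ expCost_nonneg μ.μ μ.nonneg R

end HLBAux3

section HLBMain

set_option linter.unusedSectionVars false

variable {ι : Type} [Fintype ι] [DecidableEq ι]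

lemma hellinger_key (X : Set (ι → Bool)) (f : (ι → Bool) → Bool)
    (α β : ℝ) (hα1 : 1 / 2 ≤ α) (hβ1 : 0 ≤ β) (hβ2 : β ≤ 1) :
    RmaxHelLoss X f (α * (1 - (1 - β) / 6)) ≤ RmaxHelLoss X f α + 2 * RmaxHelLoss X f β := by
  have hα0 : (0:ℝ) ≤ α := by linarith
  have hA0 : 0 ≤ RmaxHelLoss X f α := Rmax_nonneg X f α
  have hB0 : 0 ≤ RmaxHelLoss X f β := Rmax_nonneg X f β
  rw [RmaxHelLoss_eq]
  refine Real.iSup_le (fun μ => ?_) (by linarith)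
  refine le_of_forall_pos_le_add fun δ hδ => ?_
  have hδ3 : (0:ℝ) < δ / 3 := by linarith
  -- stage-1 witness
  obtain ⟨c₁, hc₁mem, hc₁lt⟩ :=
    exists_lt_of_csInf_lt ⟨_, lossSet_full_mem f hα0 μ⟩
      (lt_of_le_of_lt (sInf_lossSet_le_Rmax X f hα0 μ)
        (by linarith : RmaxHelLoss X f α < RmaxHelLoss X f α + δ / 3))
  obtain ⟨R₁, hR₁loss, hR₁cost⟩ := hc₁mem
  -- per-path stage-2 witnesses
  have hwit : ∀ p : List (ι × Bool), ∃ Rg : RandAlg ι Unit,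
      helLossAlg f (pathW μ.μ p) Rg ≤ β * helMass f (.leaf ()) (pathW μ.μ p) ∧
      expCost (pathW μ.μ p) Rg
        ≤ (2 * (RmaxHelLoss X f β + δ / 3)) * ∑ x, pathW μ.μ p x := by
    intro p
    have hu : ∀ x, 0 ≤ pathW μ.μ p x := pathW_nonneg μ.nonneg p
    set u : (ι → Bool) → ℝ := pathW μ.μ p with hu_def
    have ha : (0:ℝ) ≤ ∑ x, if f x then 0 else u x :=
      Finset.sum_nonneg fun x _ => by by_cases h : f x = true <;> simp [h, hu x]
    have hb : (0:ℝ) ≤ ∑ x, if f x then u x else 0 :=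
      Finset.sum_nonneg fun x _ => by by_cases h : f x = true <;> simp [h, hu x]
    set a : ℝ := ∑ x, if f x then 0 else u x with ha_def
    set b : ℝ := ∑ x, if f x then u x else 0 with hb_def
    have hsumu : ∑ x, u x = a + b := sum_split_f f u
    have hM : helMass f (.leaf () : DTree ι Unit) u = 2 * Real.sqrt (a * b) :=
      helMass_leaf f () u
    by_cases hab : 0 < a ∧ 0 < b
    · obtain ⟨hA, hB⟩ := hab
      have hbne : (2 * b) ≠ 0 := by positivity
      have hane : (2 * a) ≠ 0 := by positivity
      set νf : (ι → Bool) → ℝ := fun x => if f x then u x / (2 * b) else u x / (2 * a)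
        with hνf_def
      have hνf0 : ∀ x, 0 ≤ νf x := by
        intro x
        by_cases h : f x = true
        · simp only [hνf_def, h, if_true]
          exact div_nonneg (hu x) (by positivity)
        · simp only [hνf_def, h, if_false]
          exact div_nonneg (hu x) (by positivity)
      have hνfsum : ∑ x, νf x = 1 := by
        have hpt : ∀ x : ι → Bool,
            νf x = (if f x then u x else 0) / (2 * b) + (if f x then 0 else u x) / (2 * a) := by
          intro x
          by_cases h : f x = true <;> simp [hνf_def, h]
        rw [Finset.sum_congr rfl fun x _ => hpt x, Finset.sum_add_distrib,
          ← Finset.sum_div, ← Finset.sum_div, ← hb_def, ← ha_def]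
        field_simp
        ring
      have hνfsupp : ∀ x, x ∉ X → νf x = 0 := by
        intro x hx
        have hux : u x = 0 := by
          rw [hu_def]
          unfold pathW
          rw [μ.supp x hx]
          exact ite_self 0
        by_cases h : f x = true <;> simp [hνf_def, h, hux]
      set ν : InputDist ι X := ⟨νf, hνf0, hνfsum, hνfsupp⟩ with hν_def
      have hid : u = fun x => (if f x then 2 * b else 2 * a) * νf x := by
        funext x
        simp only [hνf_def]
        by_cases h : f x = true
        · rw [if_pos h, if_pos h]
          field_simp
        · rw [if_neg h, if_neg h]
          field_simp
      obtain ⟨c₂, hc₂mem, hc₂lt⟩ :=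
        exists_lt_of_csInf_lt ⟨_, lossSet_full_mem f hβ1 ν⟩
          (lt_of_le_of_lt (sInf_lossSet_le_Rmax X f hβ1 ν)
            (by linarith : RmaxHelLoss X f β < RmaxHelLoss X f β + δ / 3))
      obtain ⟨R₂, h2loss, h2cost⟩ := hc₂mem
      have h2loss' : helLossAlg f νf R₂ ≤ β := h2loss
      have h2cost' : expCost νf R₂ = c₂ := h2cost
      refine ⟨R₂, ?_, ?_⟩
      · have ht := helLossAlg_tilt f νf hνf0 (2 * b) (2 * a) (by positivity) (by positivity) R₂
        rw [hM]
        calc helLossAlg f u R₂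
            = Real.sqrt ((2 * b) * (2 * a)) * helLossAlg f νf R₂ := by rw [hid]; exact ht
          _ = (2 * Real.sqrt (a * b)) * helLossAlg f νf R₂ := by
              rw [show (2 * b) * ((2:ℝ) * a) = 2 ^ 2 * (a * b) from by ring,
                Real.sqrt_mul (by norm_num : (0:ℝ) ≤ 2 ^ 2),
                Real.sqrt_sq (by norm_num : (0:ℝ) ≤ 2)]
          _ ≤ (2 * Real.sqrt (a * b)) * β :=
              mul_le_mul_of_nonneg_left h2loss' (by positivity)
          _ = β * (2 * Real.sqrt (a * b)) := mul_comm _ _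
      · have hpt2 : ∀ x, u x ≤ (2 * (a + b)) * νf x := by
          intro x
          have h0 := hνf0 x
          have hco : (if f x then 2 * b else 2 * a) ≤ 2 * (a + b) := by
            by_cases h : f x = true <;> simp [h] <;> linarith
          calc u x = (if f x then 2 * b else 2 * a) * νf x := by rw [hid]
            _ ≤ (2 * (a + b)) * νf x := mul_le_mul_of_nonneg_right hco h0
        calc expCost u R₂
            ≤ (2 * (a + b)) * expCost νf R₂ := expCost_le_pointwise u νf _ hpt2 R₂
          _ ≤ (2 * (a + b)) * (RmaxHelLoss X f β + δ / 3) := by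
              refine mul_le_mul_of_nonneg_left ?_ (by positivity)
              rw [h2cost']
              exact le_of_lt hc₂lt
          _ = (2 * (RmaxHelLoss X f β + δ / 3)) * ∑ x, u x := by
              rw [hsumu]; ring
    · have hab0 : a * b = 0 := by
        rcases not_and_or.mp hab with h | h
        · have h0 : a = 0 := le_antisymm (not_lt.mp h) ha
          rw [h0, zero_mul]
        · have h0 : b = 0 := le_antisymm (not_lt.mp h) hb
          rw [h0, mul_zero]
      refine ⟨trivAlg, ?_, ?_⟩
      · rw [helLossAlg_triv, detHel_eq_helMass f (DTree.leaf ()) u hu, hM, hab0,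
          Real.sqrt_zero]
        simp
      · rw [expCost_triv]
        exact mul_nonneg (by linarith) (Finset.sum_nonneg fun x _ => hu x)
  choose g hg1 hg2 using hwit
  -- the composed algorithm
  have hloss : helLossAlg f μ.μ (mixAlg R₁ fun j => graftD (R₁.T j) g)
      ≤ α * (1 - (1 - β) / 6) := by
    have e1 : helLossAlg f μ.μ (mixAlg R₁ fun j => graftD (R₁.T j) g)
        = ∑ j, R₁.p j * helLossAlg f μ.μ (graftD (R₁.T j) g) := by
      rw [helLossAlg_def, eval_mixAlg]
      exact Finset.sum_congr rfl fun j _ => by rw [helLossAlg_def]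
    rw [e1]
    calc (∑ j, R₁.p j * helLossAlg f μ.μ (graftD (R₁.T j) g))
        ≤ ∑ j, R₁.p j * (β * helMass f (R₁.T j) μ.μ) :=
          Finset.sum_le_sum fun j _ => mul_le_mul_of_nonneg_left
            (master_hel f β (R₁.T j) μ.μ g μ.nonneg hg1) (R₁.p_nonneg j)
      _ = β * ∑ j, R₁.p j * detHel f μ.μ (R₁.T j) := by
          rw [Finset.mul_sum]
          refine Finset.sum_congr rfl fun j _ => ?_
          rw [detHel_eq_helMass f (R₁.T j) μ.μ μ.nonneg]
          ring
      _ = β * helLossAlg f μ.μ R₁ := by rw [← helLossAlg_def]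
      _ ≤ β * α := mul_le_mul_of_nonneg_left hR₁loss hβ1
      _ ≤ α * (1 - (1 - β) / 6) := by
          nlinarith [mul_nonneg hα0 (sub_nonneg.mpr hβ2)]
  have hcost : expCost μ.μ (mixAlg R₁ fun j => graftD (R₁.T j) g)
      ≤ RmaxHelLoss X f α + 2 * RmaxHelLoss X f β + δ := by
    have e2 : expCost μ.μ (mixAlg R₁ fun j => graftD (R₁.T j) g)
        = ∑ j, R₁.p j * expCost μ.μ (graftD (R₁.T j) g) := by
      rw [expCost_def, eval_mixAlg]
      exact Finset.sum_congr rfl fun j _ => by rw [expCost_def]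
    rw [e2]
    have hstep : (∑ j, R₁.p j * expCost μ.μ (graftD (R₁.T j) g))
        ≤ ∑ j, R₁.p j * (detCost μ.μ (R₁.T j)
            + (2 * (RmaxHelLoss X f β + δ / 3)) * ∑ x, μ.μ x) :=
      Finset.sum_le_sum fun j _ => mul_le_mul_of_nonneg_left
        (master_cost (2 * (RmaxHelLoss X f β + δ / 3)) (R₁.T j) μ.μ g μ.nonneg hg2)
        (R₁.p_nonneg j)
    have hsimp : (∑ j, R₁.p j * (detCost μ.μ (R₁.T j)
          + (2 * (RmaxHelLoss X f β + δ / 3)) * ∑ x, μ.μ x))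
        = expCost μ.μ R₁ + 2 * (RmaxHelLoss X f β + δ / 3) := by
      rw [μ.sum_one, mul_one]
      have hdist : ∀ j : Fin R₁.k,
          R₁.p j * (detCost μ.μ (R₁.T j) + 2 * (RmaxHelLoss X f β + δ / 3))
            = R₁.p j * detCost μ.μ (R₁.T j) + R₁.p j * (2 * (RmaxHelLoss X f β + δ / 3)) :=
        fun j => mul_add _ _ _
      rw [Finset.sum_congr rfl fun j _ => hdist j, Finset.sum_add_distrib,
        sum_mul_helper R₁.p R₁.p_sum, ← expCost_def]
    rw [hsimp] at hstep
    have hc : expCost μ.μ R₁ < RmaxHelLoss X f α + δ / 3 := by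
      rw [hR₁cost]; exact hc₁lt
    linarith
  exact le_trans (csInf_le (lossSet_bdd f _ μ) ⟨_, hloss, rfl⟩) hcost

end HLBMain

/-- **Hellinger loss boosting**:
`R̄̄_{Hel↓, α(1−(1−β)/6)}(f) ≤ R̄̄_{Hel↓, α}(f) + 2·R̄̄_{Hel↓, β}(f)`. -/
theorem hellinger_loss_boosting
    (m : ℕ) (X : Set (Fin m → Bool)) (f : (Fin m → Bool) → Bool)
    (α β : ℝ) (hα1 : 1 / 2 ≤ α) (hα2 : α ≤ 1) (hβ1 : 0 ≤ β) (hβ2 : β ≤ 1) :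
    RmaxHelLoss X f (α * (1 - (1 - β) / 6)) ≤
      RmaxHelLoss X f α + 2 * RmaxHelLoss X f β := by
  exact hellinger_key X f α β hα1 hβ1 hβ2
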